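/- Let n, l₁, …, l_k be positive natural numbers and let d = gcd(l₁, …, l_k). Then the least common multiple of the numbers nd/gcd(nd, l₁), …, nd/gcd(nd, l_k) equals n. -/
import Mathlib

private lemma foldr_lcm_dvd (c : ℕ) (s : List ℕ) (h : ∀ a ∈ s, a ∣ c) :
    s.foldr Nat.lcm 1 ∣ c := by
  induction s with
  | nil => exact Nat.one_dvd c
  | cons a t ih =>
      simp only [List.foldr_cons]
      exact Nat.lcm_dvd (h a (by simp)) (ih fun b hb => h b (by simp [hb]))

private lemma dvd_foldr_lcm (a : ℕ) (s : List ℕ) (ha : a ∈ s) :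
    a ∣ s.foldr Nat.lcm 1 := by
  induction s with
  | nil => simp at ha
  | cons b t ih =>
      simp only [List.foldr_cons]
      rcases List.mem_cons.mp ha with h | h
      · exact h ▸ Nat.dvd_lcm_left _ _
      · exact (ih h).trans (Nat.dvd_lcm_right _ _)

private lemma foldr_gcd_dvd (a : ℕ) (s : List ℕ) (ha : a ∈ s) :
    s.foldr Nat.gcd 0 ∣ a := by
  induction s with
  | nil => simp at ha
  | cons b t ih =>
      simp only [List.foldr_cons]
      rcases List.mem_cons.mp ha with h | h
      · exact h ▸ Nat.gcd_dvd_left _ _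
      · exact (Nat.gcd_dvd_right _ _).trans (ih h)

private lemma dvd_foldr_gcd (c : ℕ) (s : List ℕ) (h : ∀ a ∈ s, c ∣ a) :
    c ∣ s.foldr Nat.gcd 0 := by
  induction s with
  | nil => simp
  | cons a t ih =>
      simp only [List.foldr_cons]
      exact Nat.dvd_gcd (h a (by simp)) (ih fun b hb => h b (by simp [hb]))

private lemma dvd_mul_foldr_gcd (c L : ℕ) (s : List ℕ) (h : ∀ a ∈ s, c ∣ L * a) :
    c ∣ L * s.foldr Nat.gcd 0 := by
  induction s with
  | nil => simp
  | cons a t ih =>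
      simp only [List.foldr_cons]
      rw [← Nat.gcd_mul_left]
      exact Nat.dvd_gcd (h a (by simp)) (ih fun b hb => h b (by simp [hb]))

/-- Lemma 3: for positive `n` and positive `l₁, …, l_k` with gcd `d`, the lcm of
the numbers `n*d / gcd (n*d) lᵢ` equals `n`. -/
theorem stmt_0 (n : ℕ) (hn : 0 < n) (l : List ℕ) (hl : l ≠ [])
    (hpos : ∀ x ∈ l, 0 < x) (d : ℕ) (hd : d = l.foldr Nat.gcd 0) :
    (l.map (fun x => n * d / Nat.gcd (n * d) x)).foldr Nat.lcm 1 = n := by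
  obtain ⟨x₀, hx₀⟩ := List.exists_mem_of_ne_nil l hl
  have hdx : ∀ x ∈ l, d ∣ x := fun x hx => hd ▸ foldr_gcd_dvd x l hx
  have hdpos : 0 < d := Nat.pos_of_dvd_of_pos (hdx x₀ hx₀) (hpos x₀ hx₀)
  set L := (l.map (fun x => n * d / Nat.gcd (n * d) x)).foldr Nat.lcm 1 with hL
  -- facts about g_x
  have key : ∀ x ∈ l, d ∣ Nat.gcd (n * d) x ∧ Nat.gcd (n * d) x ∣ n * d := by
    intro x hx
    exact ⟨Nat.dvd_gcd ⟨n, mul_comm n d⟩ (hdx x hx), Nat.gcd_dvd_left _ _⟩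
  -- L ∣ n
  have hLn : L ∣ n := by
    apply foldr_lcm_dvd n _
    intro a ha
    obtain ⟨x, hx, rfl⟩ := List.mem_map.mp ha
    obtain ⟨hdg, hg⟩ := key x hx
    set g := Nat.gcd (n * d) x with hgdef
    obtain ⟨h, hh⟩ := hdg
    refine ⟨h, ?_⟩
    have h1 : n * d = g * (n * d / g) := (Nat.mul_div_cancel' hg).symm
    have : d * n = d * (n * d / g * h) := by
      calc d * n = n * d := by ring
        _ = g * (n * d / g) := h1
        _ = d * h * (n * d / g) := by rw [← hh]
        _ = d * (n * d / g * h) := by ring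
    exact Nat.eq_of_mul_eq_mul_left hdpos this
  -- n ∣ L
  have hnL : n ∣ L := by
    have hnd : n * d ∣ L * ((l.map (fun x => Nat.gcd (n * d) x)).foldr Nat.gcd 0) := by
      apply dvd_mul_foldr_gcd
      intro a ha
      obtain ⟨x, hx, rfl⟩ := List.mem_map.mp ha
      obtain ⟨hdg, hg⟩ := key x hx
      have hmem : n * d / Nat.gcd (n * d) x ∈ l.map (fun x => n * d / Nat.gcd (n * d) x) :=
        List.mem_map.mpr ⟨x, hx, rfl⟩
      have h2 : n * d / Nat.gcd (n * d) x ∣ L := dvd_foldr_lcm _ _ hmem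
      calc n * d = Nat.gcd (n * d) x * (n * d / Nat.gcd (n * d) x) :=
            (Nat.mul_div_cancel' hg).symm
        _ ∣ Nat.gcd (n * d) x * L := Nat.mul_dvd_mul_left _ h2
        _ = L * Nat.gcd (n * d) x := mul_comm _ _
    have hGd : (l.map (fun x => Nat.gcd (n * d) x)).foldr Nat.gcd 0 = d := by
      apply Nat.dvd_antisymm
      · have h3 : (l.map (fun x => Nat.gcd (n * d) x)).foldr Nat.gcd 0 ∣ l.foldr Nat.gcd 0 := by
          apply dvd_foldr_gcd
          intro x hx
          have : (fun x => Nat.gcd (n * d) x) x ∈ l.map (fun x => Nat.gcd (n * d) x) :=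
            List.mem_map.mpr ⟨x, hx, rfl⟩
          exact (foldr_gcd_dvd _ _ this).trans (Nat.gcd_dvd_right _ _)
        rwa [← hd] at h3
      · apply dvd_foldr_gcd
        intro a ha
        obtain ⟨x, hx, rfl⟩ := List.mem_map.mp ha
        exact (key x hx).1
    rw [hGd] at hnd
    exact (Nat.mul_dvd_mul_iff_right hdpos).mp hnd
  exact Nat.dvd_antisymm hLn hnL
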